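/- For any fixed q ∈ [0,1], the function p ↦ D_H²(Ber(p), Ber(q)) is (1/4)-strongly convex on (0,1); in particular its second derivative in p is at least 1/4 for all p ∈ (0,1). -/

import Mathlib

open Real

private lemma hasDerivAt_f (q : ℝ) {p : ℝ} (hp : p ∈ Set.Ioo (0 : ℝ) 1) :
    HasDerivAt (fun p => (1 / 2) * ((Real.sqrt p - Real.sqrt q) ^ 2 +
        (Real.sqrt (1 - p) - Real.sqrt (1 - q)) ^ 2))
      ((1 / 2) * (Real.sqrt (1 - q) / Real.sqrt (1 - p) - Real.sqrt q / Real.sqrt p)) p := by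
  obtain ⟨hp0, hp1⟩ := hp
  have h1p : (0 : ℝ) < 1 - p := by linarith
  have hsp : Real.sqrt p ≠ 0 := by positivity
  have hs1p : Real.sqrt (1 - p) ≠ 0 := by positivity
  have hs : HasDerivAt Real.sqrt (1 / (2 * Real.sqrt p)) p := Real.hasDerivAt_sqrt hp0.ne'
  have hlin : HasDerivAt (fun x : ℝ => 1 - x) (-1) p := by
    simpa using (hasDerivAt_id p).const_sub 1
  have hs2 : HasDerivAt (fun x : ℝ => Real.sqrt (1 - x))
      (1 / (2 * Real.sqrt (1 - p)) * (-1)) p :=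
    (Real.hasDerivAt_sqrt h1p.ne').comp p hlin
  have h1 : HasDerivAt (fun x : ℝ => (Real.sqrt x - Real.sqrt q) ^ 2)
      (2 * (Real.sqrt p - Real.sqrt q) * (1 / (2 * Real.sqrt p))) p := by
    simpa using ((hs.sub_const (Real.sqrt q)).fun_pow 2)
  have h2 : HasDerivAt (fun x : ℝ => (Real.sqrt (1 - x) - Real.sqrt (1 - q)) ^ 2)
      (2 * (Real.sqrt (1 - p) - Real.sqrt (1 - q)) * (1 / (2 * Real.sqrt (1 - p)) * (-1))) p := by
    simpa using ((hs2.sub_const (Real.sqrt (1 - q))).fun_pow 2)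
  have := ((h1.fun_add h2).const_mul (1 / 2 : ℝ))
  refine this.congr_deriv ?_
  field_simp
  ring

private lemma hasDerivAt_g (q : ℝ) {p : ℝ} (hp : p ∈ Set.Ioo (0 : ℝ) 1) :
    HasDerivAt (fun p => (1 / 2) * (Real.sqrt (1 - q) / Real.sqrt (1 - p) -
        Real.sqrt q / Real.sqrt p))
      (Real.sqrt (1 - q) / (4 * ((1 - p) * Real.sqrt (1 - p))) +
        Real.sqrt q / (4 * (p * Real.sqrt p))) p := by
  obtain ⟨hp0, hp1⟩ := hp
  have h1p : (0 : ℝ) < 1 - p := by linarith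
  have hsp : Real.sqrt p ≠ 0 := by positivity
  have hs1p : Real.sqrt (1 - p) ≠ 0 := by positivity
  have hs : HasDerivAt Real.sqrt (1 / (2 * Real.sqrt p)) p := Real.hasDerivAt_sqrt hp0.ne'
  have hlin : HasDerivAt (fun x : ℝ => 1 - x) (-1) p := by
    simpa using (hasDerivAt_id p).const_sub 1
  have hs2 : HasDerivAt (fun x : ℝ => Real.sqrt (1 - x))
      (1 / (2 * Real.sqrt (1 - p)) * (-1)) p :=
    (Real.hasDerivAt_sqrt h1p.ne').comp p hlin
  have h1 : HasDerivAt (fun x : ℝ => Real.sqrt q / Real.sqrt x)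
      (-(Real.sqrt q * (1 / (2 * Real.sqrt p))) / (Real.sqrt p) ^ 2) p := by
    simpa [div_eq_mul_inv, mul_comm, mul_assoc, neg_div] using
      ((hs.inv hsp).const_mul (Real.sqrt q))
  have h2 : HasDerivAt (fun x : ℝ => Real.sqrt (1 - q) / Real.sqrt (1 - x))
      (-(Real.sqrt (1 - q) * (1 / (2 * Real.sqrt (1 - p)) * (-1))) / (Real.sqrt (1 - p)) ^ 2)
      p := by
    simpa [div_eq_mul_inv, mul_comm, mul_assoc, neg_div] using
      ((hs2.inv hs1p).const_mul (Real.sqrt (1 - q)))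
  have := ((h2.fun_sub h1).const_mul (1 / 2 : ℝ))
  refine this.congr_deriv ?_
  rw [Real.sq_sqrt hp0.le, Real.sq_sqrt h1p.le]
  field_simp
  ring

private lemma h_lower (q : ℝ) (hq : q ∈ Set.Icc (0 : ℝ) 1) {p : ℝ}
    (hp : p ∈ Set.Ioo (0 : ℝ) 1) :
    (1 / 4 : ℝ) ≤ Real.sqrt (1 - q) / (4 * ((1 - p) * Real.sqrt (1 - p))) +
      Real.sqrt q / (4 * (p * Real.sqrt p)) := by
  obtain ⟨hp0, hp1⟩ := hp
  obtain ⟨hq0, hq1⟩ := hq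
  have h1p : (0 : ℝ) < 1 - p := by linarith
  have hsp1 : Real.sqrt p ≤ 1 := Real.sqrt_le_one.2 hp1.le
  have hs1p1 : Real.sqrt (1 - p) ≤ 1 := Real.sqrt_le_one.2 (by linarith)
  have hsp0 : (0 : ℝ) < Real.sqrt p := Real.sqrt_pos.2 hp0
  have hs1p0 : (0 : ℝ) < Real.sqrt (1 - p) := Real.sqrt_pos.2 h1p
  have hd1 : p * Real.sqrt p ≤ 1 := by nlinarith
  have hd2 : (1 - p) * Real.sqrt (1 - p) ≤ 1 := by nlinarith
  have hA : Real.sqrt q / 4 ≤ Real.sqrt q / (4 * (p * Real.sqrt p)) := by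
    rw [div_le_div_iff₀ (by norm_num) (by positivity)]
    nlinarith [Real.sqrt_nonneg q]
  have hB : Real.sqrt (1 - q) / 4 ≤
      Real.sqrt (1 - q) / (4 * ((1 - p) * Real.sqrt (1 - p))) := by
    rw [div_le_div_iff₀ (by norm_num) (by positivity)]
    nlinarith [Real.sqrt_nonneg (1 - q)]
  have hq' : q ≤ Real.sqrt q := by
    nlinarith [Real.sq_sqrt hq0, Real.sqrt_nonneg q, Real.sqrt_le_one.2 hq1]
  have h1q' : 1 - q ≤ Real.sqrt (1 - q) := by
    nlinarith [Real.sq_sqrt (by linarith : (0:ℝ) ≤ 1 - q), Real.sqrt_nonneg (1 - q),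
      Real.sqrt_le_one.2 (by linarith : (1:ℝ) - q ≤ 1)]
  linarith

/-- For fixed q ∈ [0,1], the function
p ↦ D_H²(Ber(p),Ber(q)) = (1/2)((√p−√q)² + (√(1−p)−√(1−q))²) is (1/4)-strongly
convex on (0,1); in particular its second derivative is at least 1/4 on (0,1). -/
theorem hellinger_bernoulli_strongly_convex (q : ℝ) (hq : q ∈ Set.Icc (0 : ℝ) 1) :
    StrongConvexOn (Set.Ioo (0 : ℝ) 1) (1 / 4)
      (fun p => (1 / 2) * ((Real.sqrt p - Real.sqrt q) ^ 2 +
        (Real.sqrt (1 - p) - Real.sqrt (1 - q)) ^ 2)) ∧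
    ∀ p ∈ Set.Ioo (0 : ℝ) 1,
      (1 / 4 : ℝ) ≤ deriv (deriv (fun p => (1 / 2) * ((Real.sqrt p - Real.sqrt q) ^ 2 +
        (Real.sqrt (1 - p) - Real.sqrt (1 - q)) ^ 2))) p := by
  set f : ℝ → ℝ := fun p => (1 / 2) * ((Real.sqrt p - Real.sqrt q) ^ 2 +
      (Real.sqrt (1 - p) - Real.sqrt (1 - q)) ^ 2) with hf_def
  set g : ℝ → ℝ := fun p => (1 / 2) * (Real.sqrt (1 - q) / Real.sqrt (1 - p) -
      Real.sqrt q / Real.sqrt p) with hg_def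
  set h : ℝ → ℝ := fun p => Real.sqrt (1 - q) / (4 * ((1 - p) * Real.sqrt (1 - p))) +
      Real.sqrt q / (4 * (p * Real.sqrt p)) with hh_def
  have hA : ∀ p ∈ Set.Ioo (0 : ℝ) 1, HasDerivAt f (g p) p := fun p hp => hasDerivAt_f q hp
  have hB : ∀ p ∈ Set.Ioo (0 : ℝ) 1, HasDerivAt g (h p) p := fun p hp => hasDerivAt_g q hp
  have hC : ∀ p ∈ Set.Ioo (0 : ℝ) 1, (1 / 4 : ℝ) ≤ h p := fun p hp => h_lower q hq hp
  constructor
  · rw [strongConvexOn_iff_convex]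
    have hint : interior (Set.Ioo (0 : ℝ) 1) = Set.Ioo (0 : ℝ) 1 :=
      interior_eq_iff_isOpen.2 isOpen_Ioo
    apply convexOn_of_hasDerivWithinAt2_nonneg (convex_Ioo 0 1)
      (f' := fun p => g p - (1 / 4) * p) (f'' := fun p => h p - 1 / 4)
    · apply Continuous.continuousOn
      have hfc : Continuous f := by
        apply continuous_const.mul
        exact ((Real.continuous_sqrt.sub continuous_const).pow 2).add
          (((Real.continuous_sqrt.comp (continuous_const.sub continuous_id)).sub
            continuous_const).pow 2)
      exact hfc.sub (by continuity)
    · intro x hx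
      rw [hint] at hx ⊢
      have : HasDerivAt (fun p : ℝ => f p - 1 / 4 / 2 * ‖p‖ ^ 2) (g x - 1 / 4 * x) x := by
        have hn : HasDerivAt (fun p : ℝ => 1 / 4 / 2 * ‖p‖ ^ 2) (1 / 4 * x) x := by
          simp only [Real.norm_eq_abs, sq_abs]
          have h2 := (hasDerivAt_pow 2 x).const_mul (1 / 4 / 2 : ℝ)
          refine h2.congr_deriv ?_
          ring
        simpa using (hA x hx).fun_sub hn
      exact this.hasDerivWithinAt
    · intro x hx
      rw [hint] at hx ⊢
      have : HasDerivAt (fun p => g p - 1 / 4 * p) (h x - 1 / 4) x := by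
        simpa using (hB x hx).fun_sub ((hasDerivAt_id x).const_mul (1 / 4 : ℝ))
      exact this.hasDerivWithinAt
    · intro x hx
      rw [hint] at hx
      have := hC x hx
      linarith
  · intro p hp
    have hev : deriv f =ᶠ[nhds p] g := by
      filter_upwards [isOpen_Ioo.mem_nhds hp] with x hx using (hA x hx).deriv
    rw [hev.deriv_eq, (hB p hp).deriv]
    exact hC p hp
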